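/- Let A, Â ∈ ℝ^{n×n} be symmetric matrices with 0 ⪯ Â ⪯ A, and set P̂ := Â + I and M̂ := P̂^{-1/2}(A+I)P̂^{-1/2}. Then ‖log(M̂)‖₂ = log(1 + ‖P̂^{-1/2}(A − Â)P̂^{-1/2}‖₂) ≤ log(1 + ‖A − Â‖₂). -/

import Mathlib

open MeasureTheory ProbabilityTheory Matrix

/-- Matrix logarithm of a real symmetric matrix, obtained by applying the real logarithm
to the eigenvalues in a spectral decomposition. -/
noncomputable def matLog {n : ℕ} (B : Matrix (Fin n) (Fin n) ℝ) : Matrix (Fin n) (Fin n) ℝ :=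
  if hB : B.IsHermitian then
    (hB.eigenvectorUnitary : Matrix (Fin n) (Fin n) ℝ) *
      Matrix.diagonal (fun i => Real.log (hB.eigenvalues i)) *
      (star (hB.eigenvectorUnitary : Matrix (Fin n) (Fin n) ℝ))
  else 0

open scoped Classical in
/-- `B^{-1/2}`: the inverse of the unique positive semidefinite square root of a
positive semidefinite matrix `B`. -/
noncomputable def invSqrt {n : ℕ} (B : Matrix (Fin n) (Fin n) ℝ) : Matrix (Fin n) (Fin n) ℝ :=
  if hB : B.PosSemidef then
    ((hB.1.eigenvectorUnitary : Matrix (Fin n) (Fin n) ℝ) *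
      Matrix.diagonal (Real.sqrt ∘ hB.1.eigenvalues) *
      (star (hB.1.eigenvectorUnitary : Matrix (Fin n) (Fin n) ℝ)))⁻¹ else 0

/-- Squared Frobenius norm of a matrix. -/
noncomputable def frobSq {m n : ℕ} (H : Matrix (Fin m) (Fin n) ℝ) : ℝ :=
  ∑ i, ∑ j, (H i j) ^ 2

/-- Singular values of a matrix (square roots of the eigenvalues of `HᴴH`). -/
noncomputable def singVals {m n : ℕ} (H : Matrix (Fin m) (Fin n) ℝ) : Fin n → ℝ :=
  fun i => Real.sqrt (((by simpa using Matrix.isHermitian_conjTranspose_mul_self H : (Hᵀ * H).IsHermitian)).eigenvalues i)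

/-- Nuclear norm: sum of the singular values. -/
noncomputable def nuclearNorm {m n : ℕ} (H : Matrix (Fin m) (Fin n) ℝ) : ℝ :=
  ∑ i, singVals H i

/-- Spectral norm: largest singular value. -/
noncomputable def specNorm {m n : ℕ} (H : Matrix (Fin m) (Fin n) ℝ) : ℝ :=
  ⨆ i, singVals H i

/-- Eigenvalues of a symmetric matrix, sorted in decreasing order
(`eigDesc B i` is the `i`-th largest eigenvalue). -/
noncomputable def eigDesc {n : ℕ} (B : Matrix (Fin n) (Fin n) ℝ) : Fin n → ℝ :=
  if hB : B.IsHermitian then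
    fun i => (hB.eigenvalues ∘ Tuple.sort hB.eigenvalues) i.rev
  else 0

/-- Law of a standard Gaussian random vector in `ℝⁿ` (i.i.d. `gaussianReal 0 1` entries). -/
noncomputable def stdGaussian (n : ℕ) : Measure (Fin n → ℝ) :=
  Measure.pi fun _ => gaussianReal 0 1

/-- Law of a random `n × ℓ` matrix with i.i.d. standard Gaussian entries. -/
noncomputable def stdGaussianMatrix (n ℓ : ℕ) : Measure (Fin n → Fin ℓ → ℝ) :=
  Measure.pi fun _ => Measure.pi fun _ => gaussianReal 0 1

/-- The truncated-spectral-decomposition preconditioner `P_r = A_r + I`, where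
`A_r = U_r Λ_r U_rᵀ` keeps the `r` leading eigenvalues. -/
noncomputable def truncP {n : ℕ} (U : Matrix (Fin n) (Fin n) ℝ) (lam : Fin n → ℝ) (r : ℕ) :
    Matrix (Fin n) (Fin n) ℝ :=
  U * Matrix.diagonal (fun i : Fin n => if (i : ℕ) < r then lam i else 0) * Uᵀ + 1

/-- The idealized preconditioned matrix `M_r = P_r^{-1/2} (A + I) P_r^{-1/2}`. -/
noncomputable def truncM {n : ℕ} (A U : Matrix (Fin n) (Fin n) ℝ) (lam : Fin n → ℝ) (r : ℕ) :
    Matrix (Fin n) (Fin n) ℝ :=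
  invSqrt (truncP U lam r) * (A + 1) * invSqrt (truncP U lam r)

/-- The Nyström approximation `Â = AΩ(ΩᵀAΩ)⁻¹ΩᵀA`. -/
noncomputable def nystrom {n ℓ : ℕ} (A : Matrix (Fin n) (Fin n) ℝ)
    (Ω : Matrix (Fin n) (Fin ℓ) ℝ) : Matrix (Fin n) (Fin n) ℝ :=
  A * Ω * (Ωᵀ * A * Ω)⁻¹ * Ωᵀ * A

/-- The Nyström-preconditioned matrix `M̂ = P̂^{-1/2} (A + I) P̂^{-1/2}` with `P̂ = Â + I`. -/
noncomputable def nysPrec {n ℓ : ℕ} (A : Matrix (Fin n) (Fin n) ℝ)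
    (Ω : Matrix (Fin n) (Fin ℓ) ℝ) : Matrix (Fin n) (Fin n) ℝ :=
  invSqrt (nystrom A Ω + 1) * (A + 1) * invSqrt (nystrom A Ω + 1)



section SpecAux
variable {n : ℕ}

private lemma psd_quad {B : Matrix (Fin n) (Fin n) ℝ} (hB : B.PosSemidef) (x : Fin n → ℝ) :
    0 ≤ x ⬝ᵥ (B *ᵥ x) := by
  have h := hB.dotProduct_mulVec_nonneg x
  simpa using h

private lemma diag_nonneg_of_psd {V : Matrix (Fin n) (Fin n) ℝ} (hV : star V * V = 1)
    {d : Fin n → ℝ} (h : (V * diagonal d * star V).PosSemidef) (j : Fin n) : 0 ≤ d j := by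
  classical
  set x : Fin n → ℝ := fun i => V i j with hxdef
  have h1 : star V *ᵥ x = Pi.single j 1 := by
    have : star V *ᵥ x = fun k => (star V * V) k j := by
      ext k; simp [hxdef, Matrix.mulVec, dotProduct, Matrix.mul_apply]
    rw [this, hV]; ext k; simp [Matrix.one_apply, Pi.single_apply, eq_comm]
  have h2 : (V * diagonal d * star V) *ᵥ x = d j • x := by
    rw [← Matrix.mulVec_mulVec, h1, Matrix.mulVec_single]
    ext i
    simp [Matrix.mul_diagonal, hxdef, mul_comm]
  have h3 : x ⬝ᵥ x = 1 := by
    have h4 := congrFun (congrFun hV j) j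
    simp only [Matrix.mul_apply, Matrix.star_apply, star_trivial, Matrix.one_apply_eq] at h4
    simpa [dotProduct, hxdef, mul_comm] using h4
  have h5 := psd_quad h x
  rw [h2] at h5
  have h6 : x ⬝ᵥ (d j • x) = d j * (x ⬝ᵥ x) := by
    simp [dotProduct_smul]
  rw [h6, h3, mul_one] at h5
  exact h5

private lemma psd_of_diag_nonneg {V : Matrix (Fin n) (Fin n) ℝ} {d : Fin n → ℝ}
    (hd : ∀ i, 0 ≤ d i) : (V * diagonal d * star V).PosSemidef := by
  have h := (Matrix.posSemidef_diagonal_iff.mpr hd).mul_mul_conjTranspose_same V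
  simpa [Matrix.star_eq_conjTranspose] using h

private lemma conj_smul_sub {V : Matrix (Fin n) (Fin n) ℝ} (hV2 : V * star V = 1)
    (d : Fin n → ℝ) (c : ℝ) :
    c • (1 : Matrix (Fin n) (Fin n) ℝ) - V * diagonal d * star V
      = V * diagonal (fun i => c - d i) * star V := by
  have h1 : (diagonal (fun i => c - d i) : Matrix (Fin n) (Fin n) ℝ)
      = c • 1 - diagonal d := by
    rw [Matrix.smul_one_eq_diagonal, ← Matrix.diagonal_sub]
  rw [h1, Matrix.mul_sub, Matrix.sub_mul, Matrix.mul_smul, mul_one, Matrix.smul_mul, hV2]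

private lemma conj_sub_smul {V : Matrix (Fin n) (Fin n) ℝ} (hV2 : V * star V = 1)
    (d : Fin n → ℝ) (c : ℝ) :
    V * diagonal d * star V - c • (1 : Matrix (Fin n) (Fin n) ℝ)
      = V * diagonal (fun i => d i - c) * star V := by
  have h1 : (diagonal (fun i => d i - c) : Matrix (Fin n) (Fin n) ℝ)
      = diagonal d - c • 1 := by
    rw [Matrix.smul_one_eq_diagonal, ← Matrix.diagonal_sub]
  rw [h1, Matrix.mul_sub, Matrix.sub_mul, Matrix.mul_smul, mul_one, Matrix.smul_mul, hV2]

private lemma le_iff_forall {B V : Matrix (Fin n) (Fin n) ℝ} {d : Fin n → ℝ}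
    (hV1 : star V * V = 1) (hV2 : V * star V = 1)
    (hBd : B = V * diagonal d * star V) (c : ℝ) :
    (c • (1 : Matrix (Fin n) (Fin n) ℝ) - B).PosSemidef ↔ ∀ i, d i ≤ c := by
  rw [hBd, conj_smul_sub hV2]
  constructor
  · intro h i; have := diag_nonneg_of_psd hV1 h i; linarith
  · intro h; exact psd_of_diag_nonneg (fun i => sub_nonneg.mpr (h i))

private lemma ge_iff_forall {B V : Matrix (Fin n) (Fin n) ℝ} {d : Fin n → ℝ}
    (hV1 : star V * V = 1) (hV2 : V * star V = 1)
    (hBd : B = V * diagonal d * star V) (c : ℝ) :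
    (B - c • (1 : Matrix (Fin n) (Fin n) ℝ)).PosSemidef ↔ ∀ i, c ≤ d i := by
  rw [hBd, conj_sub_smul hV2]
  constructor
  · intro h i; have := diag_nonneg_of_psd hV1 h i; linarith
  · intro h; exact psd_of_diag_nonneg (fun i => sub_nonneg.mpr (h i))

private lemma spec_decomp {B : Matrix (Fin n) (Fin n) ℝ} (hB : B.IsHermitian) :
    B = (hB.eigenvectorUnitary : Matrix (Fin n) (Fin n) ℝ) * diagonal hB.eigenvalues *
      star (hB.eigenvectorUnitary : Matrix (Fin n) (Fin n) ℝ) := by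
  have h := hB.spectral_theorem
  rwa [RCLike.ofReal_real_eq_id, Function.id_comp] at h

private lemma unit1 {B : Matrix (Fin n) (Fin n) ℝ} (hB : B.IsHermitian) :
    star (hB.eigenvectorUnitary : Matrix (Fin n) (Fin n) ℝ) *
      (hB.eigenvectorUnitary : Matrix (Fin n) (Fin n) ℝ) = 1 :=
  Matrix.mem_unitaryGroup_iff'.mp hB.eigenvectorUnitary.2

private lemma unit2 {B : Matrix (Fin n) (Fin n) ℝ} (hB : B.IsHermitian) :
    (hB.eigenvectorUnitary : Matrix (Fin n) (Fin n) ℝ) *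
      star (hB.eigenvectorUnitary : Matrix (Fin n) (Fin n) ℝ) = 1 :=
  Matrix.mem_unitaryGroup_iff.mp hB.eigenvectorUnitary.2

private lemma iSup_eq_iSup {f g : Fin n → ℝ} [Nonempty (Fin n)]
    (h : ∀ c, (∀ i, f i ≤ c) ↔ ∀ i, g i ≤ c) : ⨆ i, f i = ⨆ i, g i :=
  le_antisymm
    (ciSup_le fun i => (h _).mpr (fun j => le_ciSup (Set.finite_range g).bddAbove j) i)
    (ciSup_le fun i => (h _).mp (fun j => le_ciSup (Set.finite_range f).bddAbove j) i)

private lemma iSup_mono_comp {f : Fin n → ℝ} [Nonempty (Fin n)] {g : ℝ → ℝ}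
    (hg : Monotone g) : ⨆ i, g (f i) = g (⨆ i, f i) := by
  obtain ⟨i0, hi0⟩ := Finite.exists_max f
  have hs : ⨆ i, f i = f i0 :=
    le_antisymm (ciSup_le hi0) (le_ciSup (Set.finite_range f).bddAbove i0)
  rw [hs]
  exact le_antisymm (ciSup_le fun i => hg (hi0 i))
    (le_ciSup (Set.finite_range fun i => g (f i)).bddAbove i0)

private lemma iSup_eig_eq {B V : Matrix (Fin n) (Fin n) ℝ} {d : Fin n → ℝ} [Nonempty (Fin n)]
    (hB : B.IsHermitian) (hV1 : star V * V = 1) (hV2 : V * star V = 1)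
    (hBd : B = V * diagonal d * star V) :
    ⨆ i, hB.eigenvalues i = ⨆ i, d i :=
  iSup_eq_iSup fun c =>
    (le_iff_forall (unit1 hB) (unit2 hB) (spec_decomp hB) c).symm.trans
      (le_iff_forall hV1 hV2 hBd c)

private lemma conj_mul_conj {V : Matrix (Fin n) (Fin n) ℝ} (hV1 : star V * V = 1)
    (d e : Fin n → ℝ) :
    (V * diagonal d * star V) * (V * diagonal e * star V)
      = V * diagonal (fun i => d i * e i) * star V := by
  have key : star V * (V * (diagonal e * star V)) = diagonal e * star V := by
    rw [← Matrix.mul_assoc, hV1, Matrix.one_mul]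
  simp only [Matrix.mul_assoc]
  rw [key, ← Matrix.mul_assoc (diagonal d), Matrix.diagonal_mul_diagonal]

private lemma conj_conjTranspose {V : Matrix (Fin n) (Fin n) ℝ} (d : Fin n → ℝ) :
    (V * diagonal d * star V)ᴴ = V * diagonal d * star V := by
  simp [Matrix.conjTranspose_mul, Matrix.diagonal_conjTranspose, Matrix.star_eq_conjTranspose,
    Matrix.mul_assoc]

end SpecAux

section SpecAux2
variable {n : ℕ}

private lemma matLog_eq {B : Matrix (Fin n) (Fin n) ℝ} (hB : B.IsHermitian) :
    matLog B = (hB.eigenvectorUnitary : Matrix (Fin n) (Fin n) ℝ) *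
      Matrix.diagonal (fun i => Real.log (hB.eigenvalues i)) *
      (star (hB.eigenvectorUnitary : Matrix (Fin n) (Fin n) ℝ)) := by
  unfold matLog
  rw [dif_pos hB]

private lemma specNorm_psd [Nonempty (Fin n)] {B : Matrix (Fin n) (Fin n) ℝ}
    (hB : B.PosSemidef) : specNorm B = ⨆ i, hB.1.eigenvalues i := by
  classical
  obtain ⟨i0, hi0⟩ := Finite.exists_max hB.1.eigenvalues
  have hnn : ∀ i, 0 ≤ hB.1.eigenvalues i := hB.eigenvalues_nonneg
  have hmu : ⨆ i, hB.1.eigenvalues i = hB.1.eigenvalues i0 :=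
    le_antisymm (ciSup_le hi0) (le_ciSup (Set.finite_range hB.1.eigenvalues).bddAbove i0)
  have hBB : Bᴴ * B = (hB.1.eigenvectorUnitary : Matrix (Fin n) (Fin n) ℝ) *
      Matrix.diagonal (fun i => hB.1.eigenvalues i * hB.1.eigenvalues i) *
      star (hB.1.eigenvectorUnitary : Matrix (Fin n) (Fin n) ℝ) := by
    rw [hB.1.eq]
    conv_lhs => rw [spec_decomp hB.1]
    exact conj_mul_conj (unit1 hB.1) _ _
  have e1 : specNorm B = Real.sqrt (⨆ i, (by simpa using Matrix.isHermitian_conjTranspose_mul_self B : (Bᵀ * B).IsHermitian).eigenvalues i) := by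
    simp only [specNorm, singVals]
    exact iSup_mono_comp (fun a b hab => Real.sqrt_le_sqrt hab)
  have e2 : ⨆ i, (by simpa using Matrix.isHermitian_conjTranspose_mul_self B : (Bᵀ * B).IsHermitian).eigenvalues i
      = ⨆ i, hB.1.eigenvalues i * hB.1.eigenvalues i :=
    iSup_eig_eq _ (unit1 hB.1) (unit2 hB.1) hBB
  have e3 : ⨆ i, hB.1.eigenvalues i * hB.1.eigenvalues i
      = hB.1.eigenvalues i0 * hB.1.eigenvalues i0 :=
    le_antisymm (ciSup_le fun i => mul_le_mul (hi0 i) (hi0 i) (hnn i) (hnn i0))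
      (le_ciSup (Set.finite_range fun i => hB.1.eigenvalues i * hB.1.eigenvalues i).bddAbove i0)
  rw [e1, e2, e3, Real.sqrt_mul_self (hnn i0), hmu]

end SpecAux2

theorem stmt12 {n : ℕ} (A Ahat : Matrix (Fin n) (Fin n) ℝ) (hAs : A.IsSymm) (hAhs : Ahat.IsSymm)
    (hpsd : Ahat.PosSemidef) (hle : (A - Ahat).PosSemidef) :
    specNorm (matLog (invSqrt (Ahat + 1) * (A + 1) * invSqrt (Ahat + 1)))
        = Real.log (1 + specNorm (invSqrt (Ahat + 1) * (A - Ahat) * invSqrt (Ahat + 1))) ∧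
      specNorm (matLog (invSqrt (Ahat + 1) * (A + 1) * invSqrt (Ahat + 1))) ≤ Real.log (1 + specNorm (A - Ahat)) := by
  classical
  rcases Nat.eq_zero_or_pos n with hn | hn
  · subst hn
    simp [specNorm, Real.iSup_of_isEmpty, Real.log_one]
  have hne : Nonempty (Fin n) := ⟨⟨0, hn⟩⟩
  -- setup
  have hP : (Ahat + 1 : Matrix (Fin n) (Fin n) ℝ).PosDef :=
    Matrix.PosDef.posSemidef_add hpsd Matrix.PosDef.one
  have hPsd : (Ahat + 1 : Matrix (Fin n) (Fin n) ℝ).PosSemidef := hP.posSemidef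
  set Q := (hPsd.1.eigenvectorUnitary : Matrix (Fin n) (Fin n) ℝ) *
      Matrix.diagonal (Real.sqrt ∘ hPsd.1.eigenvalues) *
      (star (hPsd.1.eigenvectorUnitary : Matrix (Fin n) (Fin n) ℝ)) with hQdef
  have hQpsd : Q.PosSemidef := psd_of_diag_nonneg (fun i => Real.sqrt_nonneg _)
  have hQQ : Q * Q = Ahat + 1 := by
    rw [hQdef, conj_mul_conj (unit1 hPsd.1)]
    conv_rhs => rw [spec_decomp hPsd.1]
    rw [show (fun i => (Real.sqrt ∘ hPsd.1.eigenvalues) i * (Real.sqrt ∘ hPsd.1.eigenvalues) i)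
      = hPsd.1.eigenvalues from funext fun i => Real.mul_self_sqrt (hPsd.eigenvalues_nonneg i)]
  have hdet : IsUnit Q.det := by
    have h1 : Q.det * Q.det = (Ahat + 1 : Matrix (Fin n) (Fin n) ℝ).det := by
      rw [← Matrix.det_mul, hQQ]
    have h2 : (0:ℝ) < (Ahat + 1 : Matrix (Fin n) (Fin n) ℝ).det := hP.det_pos
    have h3 : Q.det ≠ 0 := by intro h; rw [h, mul_zero] at h1; linarith
    exact h3.isUnit
  set S := Q⁻¹ with hSdef
  have hinv : invSqrt (Ahat + 1) = S := by
    simp only [invSqrt, dif_pos hPsd]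
    rfl
  have hSQ : S * Q = 1 := Matrix.nonsing_inv_mul Q hdet
  have hQS : Q * S = 1 := Matrix.mul_nonsing_inv Q hdet
  have hShermit : Sᴴ = S := by
    rw [hSdef, Matrix.conjTranspose_nonsing_inv, hQpsd.1.eq]
  have hSt : Sᵀ = S := by
    rw [← Matrix.conjTranspose_eq_transpose_of_trivial, hShermit]
  have hFpsd : (S * (A - Ahat) * S).PosSemidef := by
    have h := hle.mul_mul_conjTranspose_same S
    rwa [hShermit] at h
  have hSPS : S * (Ahat + 1) * S = 1 := by
    rw [← hQQ, ← Matrix.mul_assoc S Q Q, Matrix.mul_assoc (S*Q) Q S, hSQ, hQS, one_mul]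
  have hM1 : S * (A + 1) * S = 1 + S * (A - Ahat) * S := by
    have hA1 : (A + 1 : Matrix (Fin n) (Fin n) ℝ) = (Ahat + 1) + (A - Ahat) := by abel
    rw [hA1, Matrix.mul_add, Matrix.add_mul, hSPS]
  have hMher : (S * (A + 1) * S).IsHermitian := by
    rw [hM1]; exact Matrix.isHermitian_one.add hFpsd.1
  rw [hinv]
  -- eigenvalues of M
  have hV1 := unit1 hMher
  have hV2 := unit2 hMher
  have hdec := spec_decomp hMher
  have hlam1 : ∀ i, 1 ≤ hMher.eigenvalues i := by
    have hps : (S * (A + 1) * S - (1:ℝ) • (1 : Matrix (Fin n) (Fin n) ℝ)).PosSemidef := by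
      rw [hM1, one_smul, add_sub_cancel_left]
      exact hFpsd
    exact (ge_iff_forall hV1 hV2 hdec 1).mp hps
  obtain ⟨i0, hi0⟩ := Finite.exists_max hMher.eigenvalues
  set muM := ⨆ i, hMher.eigenvalues i with hmuMdef
  have hmuM : muM = hMher.eigenvalues i0 :=
    le_antisymm (ciSup_le hi0) (le_ciSup (Set.finite_range hMher.eigenvalues).bddAbove i0)
  have hmuM1 : 1 ≤ muM := le_trans (hlam1 i0) hmuM.ge
  -- matLog
  have hlog := matLog_eq hMher
  have hLL : (matLog (S * (A + 1) * S))ᴴ * matLog (S * (A + 1) * S)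
      = (hMher.eigenvectorUnitary : Matrix (Fin n) (Fin n) ℝ) *
        Matrix.diagonal (fun i => Real.log (hMher.eigenvalues i) * Real.log (hMher.eigenvalues i)) *
        star (hMher.eigenvectorUnitary : Matrix (Fin n) (Fin n) ℝ) := by
    rw [hlog, conj_conjTranspose]
    exact conj_mul_conj hV1 _ _
  have hSpecL : specNorm (matLog (S * (A + 1) * S)) = Real.log muM := by
    have e1 : specNorm (matLog (S * (A + 1) * S)) = Real.sqrt (⨆ i,
        (by simpa using Matrix.isHermitian_conjTranspose_mul_self (matLog (S * (A + 1) * S)) : ((matLog (S * (A + 1) * S))ᵀ * matLog (S * (A + 1) * S)).IsHermitian).eigenvalues i) := by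
      simp only [specNorm, singVals]
      exact iSup_mono_comp (fun a b hab => Real.sqrt_le_sqrt hab)
    have e2 : (⨆ i, (by simpa using Matrix.isHermitian_conjTranspose_mul_self (matLog (S * (A + 1) * S)) : ((matLog (S * (A + 1) * S))ᵀ * matLog (S * (A + 1) * S)).IsHermitian).eigenvalues i)
        = ⨆ i, Real.log (hMher.eigenvalues i) * Real.log (hMher.eigenvalues i) :=
      iSup_eig_eq _ hV1 hV2 hLL
    have hlognn : ∀ i, 0 ≤ Real.log (hMher.eigenvalues i) :=
      fun i => Real.log_nonneg (hlam1 i)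
    have hlogle : ∀ i, Real.log (hMher.eigenvalues i) ≤ Real.log (hMher.eigenvalues i0) :=
      fun i => Real.log_le_log (lt_of_lt_of_le one_pos (hlam1 i)) (hi0 i)
    have e3 : (⨆ i, Real.log (hMher.eigenvalues i) * Real.log (hMher.eigenvalues i))
        = Real.log (hMher.eigenvalues i0) * Real.log (hMher.eigenvalues i0) :=
      le_antisymm (ciSup_le fun i => mul_le_mul (hlogle i) (hlogle i) (hlognn i) (hlognn i0))
        (le_ciSup (Set.finite_range fun i =>
          Real.log (hMher.eigenvalues i) * Real.log (hMher.eigenvalues i)).bddAbove i0)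
    rw [e1, e2, e3, Real.sqrt_mul_self (hlognn i0), hmuM]
  -- mu of F
  have hdecF := spec_decomp hFpsd.1
  have hV1F := unit1 hFpsd.1
  have hV2F := unit2 hFpsd.1
  set muF := ⨆ i, hFpsd.1.eigenvalues i with hmuFdef
  have hFnn : ∀ i, 0 ≤ hFpsd.1.eigenvalues i := hFpsd.eigenvalues_nonneg
  have hmuFnn : 0 ≤ muF :=
    le_trans (hFnn i0) (le_ciSup (Set.finite_range hFpsd.1.eigenvalues).bddAbove i0)
  have key : ∀ c : ℝ, (∀ i, hMher.eigenvalues i ≤ c) ↔ (∀ i, hFpsd.1.eigenvalues i ≤ c - 1) := by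
    intro c
    rw [← le_iff_forall hV1 hV2 hdec c, ← le_iff_forall hV1F hV2F hdecF (c-1)]
    have hid : c • (1 : Matrix (Fin n) (Fin n) ℝ) - S * (A + 1) * S
        = (c - 1) • (1 : Matrix (Fin n) (Fin n) ℝ) - S * (A - Ahat) * S := by
      rw [hM1, sub_smul, one_smul]; abel
    rw [hid]
  have hmuMF : muM = 1 + muF := by
    apply le_antisymm
    · refine ciSup_le fun i => ?_
      refine (key (1 + muF)).mpr (fun j => ?_) i
      have := le_ciSup (Set.finite_range hFpsd.1.eigenvalues).bddAbove j
      rw [← hmuFdef] at this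
      linarith
    · have h := (key muM).mp (fun i => le_ciSup (Set.finite_range hMher.eigenvalues).bddAbove i)
      have h2 : muF ≤ muM - 1 := ciSup_le fun j => h j
      linarith
  -- muF ≤ muE
  have hdecE := spec_decomp hle.1
  have hV1E := unit1 hle.1
  have hV2E := unit2 hle.1
  set muE := ⨆ i, hle.1.eigenvalues i with hmuEdef
  have hEnn : ∀ i, 0 ≤ hle.1.eigenvalues i := hle.eigenvalues_nonneg
  have hmuEnn : 0 ≤ muE :=
    le_trans (hEnn i0) (le_ciSup (Set.finite_range hle.1.eigenvalues).bddAbove i0)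
  have hEbound : (muE • (1 : Matrix (Fin n) (Fin n) ℝ) - (A - Ahat)).PosSemidef :=
    (le_iff_forall hV1E hV2E hdecE muE).mpr
      (fun i => le_ciSup (Set.finite_range hle.1.eigenvalues).bddAbove i)
  have hquadE : ∀ y : Fin n → ℝ, y ⬝ᵥ ((A - Ahat) *ᵥ y) ≤ muE * (y ⬝ᵥ y) := by
    intro y
    have h := psd_quad hEbound y
    rw [Matrix.sub_mulVec, dotProduct_sub, Matrix.smul_mulVec,
      Matrix.one_mulVec, dotProduct_smul, smul_eq_mul] at h
    linarith
  have hsymmdot : ∀ (x w : Fin n → ℝ), x ⬝ᵥ (S *ᵥ w) = (S *ᵥ x) ⬝ᵥ w := by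
    intro x w
    rw [Matrix.dotProduct_mulVec]
    congr 1
    conv_lhs => rw [← hSt]
    rw [Matrix.vecMul_transpose]
  have hSS : (1 : Matrix (Fin n) (Fin n) ℝ) - S * S = S * Ahat * S := by
    have h : S * (Ahat + 1) * S = S * Ahat * S + S * S := by
      rw [Matrix.mul_add, Matrix.add_mul, Matrix.mul_one]
    rw [← hSPS, h]; abel
  have h1SS : ((1 : Matrix (Fin n) (Fin n) ℝ) - S * S).PosSemidef := by
    rw [hSS]
    have h := hpsd.mul_mul_conjTranspose_same S
    rwa [hShermit] at h
  have hcontr : ∀ x : Fin n → ℝ, (S *ᵥ x) ⬝ᵥ (S *ᵥ x) ≤ x ⬝ᵥ x := by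
    intro x
    have h := psd_quad h1SS x
    rw [Matrix.sub_mulVec, dotProduct_sub, Matrix.one_mulVec] at h
    have h2 : x ⬝ᵥ ((S * S) *ᵥ x) = (S *ᵥ x) ⬝ᵥ (S *ᵥ x) := by
      rw [← Matrix.mulVec_mulVec, hsymmdot]
    linarith [h2 ▸ h]
  have hFbound : (muE • (1 : Matrix (Fin n) (Fin n) ℝ) - S * (A - Ahat) * S).PosSemidef := by
    refine Matrix.PosSemidef.of_dotProduct_mulVec_nonneg ?_ ?_
    · have h1 : (muE • (1 : Matrix (Fin n) (Fin n) ℝ)).IsHermitian := by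
        rw [Matrix.smul_one_eq_diagonal]
        exact Matrix.isHermitian_diagonal _
      exact h1.sub hFpsd.1
    · intro x
      have hstar : star x = x := by ext i; simp
      rw [hstar]
      have hxF : x ⬝ᵥ ((S * (A - Ahat) * S) *ᵥ x) = (S *ᵥ x) ⬝ᵥ ((A - Ahat) *ᵥ (S *ᵥ x)) := by
        rw [← Matrix.mulVec_mulVec, ← Matrix.mulVec_mulVec, hsymmdot]
      have hE := hquadE (S *ᵥ x)
      have hC := hcontr x
      rw [Matrix.sub_mulVec, dotProduct_sub, Matrix.smul_mulVec,
        Matrix.one_mulVec, dotProduct_smul, hxF]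
      have : muE * ((S *ᵥ x) ⬝ᵥ (S *ᵥ x)) ≤ muE * (x ⬝ᵥ x) := by
        exact mul_le_mul_of_nonneg_left hC hmuEnn
      simp only [smul_eq_mul]
      linarith [hE, this]
  have hmuFE : muF ≤ muE := by
    have h := (le_iff_forall hV1F hV2F hdecF muE).mp hFbound
    exact ciSup_le h
  constructor
  · rw [hSpecL, hmuMF, specNorm_psd hFpsd]
  · rw [hSpecL, hmuMF, specNorm_psd hle]
    exact Real.log_le_log (by linarith) (by linarith)
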